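/- Let m ≥ 3, let ℓ ∈ {1, …, m−2}, and let L ∈ ℝ^{m×m} be invertible. For each t ∈ {ℓ+1, …, m−1}, let ψ_t ∈ ℝ^{m−ℓ−1} and define φ_t := L [0_{ℓ+1}; ψ_t] ∈ ℝ^m, where [0_{ℓ+1}; ψ_t] denotes the vector whose first ℓ+1 components are zero and whose remaining m−ℓ−1 components are ψ_t. Let z_ℓ, z_{ℓ+1}, …, z_{m−1} ∈ ℝ^{m−1} be such that φ_i^T φ_j = z_i^T z_j for all ℓ+1 ≤ i ≤ j ≤ m−1. Then there exists v ∈ ℝ^{m−ℓ} such that the vector φ_ℓ := L [0_ℓ; v] ∈ ℝ^m (whose first ℓ components before applying L are zero) satisfies φ_t^T φ_ℓ = z_t^T z_ℓ for all t ∈ {ℓ+1, …, m−1} and φ_ℓ^T φ_ℓ = z_ℓ^T z_ℓ. -/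

import Mathlib

open Matrix
open scoped RealInnerProductSpace

/-- `pad m j u` is the vector in `ℝ^m` whose first `j` components are zero and whose
last `m − j` components are those of `u`. -/
def pad (m j : ℕ) (u : Fin (m - j) → ℝ) : Fin m → ℝ := fun a =>
  if h : j ≤ (a : ℕ) then u ⟨(a : ℕ) - j, by have := a.isLt; omega⟩ else 0

lemma pad_add (m j : ℕ) (u v : Fin (m - j) → ℝ) :
    pad m j (u + v) = pad m j u + pad m j v := by
  funext a; simp only [pad, Pi.add_apply]; split <;> simp

lemma pad_smul (m j : ℕ) (c : ℝ) (u : Fin (m - j) → ℝ) :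
    pad m j (c • u) = c • pad m j u := by
  funext a; simp only [pad, Pi.smul_apply, smul_eq_mul]; split <;> simp

lemma pad_pad (m ℓ : ℕ) (u : Fin (m - (ℓ + 1)) → ℝ) :
    pad m ℓ (pad (m - ℓ) 1 u) = pad m (ℓ + 1) u := by
  funext a
  simp only [pad]
  by_cases h1 : ℓ ≤ (a : ℕ)
  · rw [dif_pos h1]
    by_cases h2 : ℓ + 1 ≤ (a : ℕ)
    · rw [dif_pos h2]
      have h3 : (1 : ℕ) ≤ (a : ℕ) - ℓ := by omega
      rw [dif_pos h3]
      congr 1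
    · rw [dif_neg h2]
      have h3 : ¬ (1 : ℕ) ≤ (a : ℕ) - ℓ := by omega
      rw [dif_neg h3]
  · rw [dif_neg h1, dif_neg (by omega : ¬ ℓ + 1 ≤ (a : ℕ))]

lemma pad_injective (m j : ℕ) (hj : j ≤ m) : Function.Injective (pad m j) := by
  intro u u' h
  funext b
  have hb : j + (b : ℕ) < m := by have := b.isLt; omega
  have := congrFun h ⟨j + b, hb⟩
  simp only [pad, dif_pos (by omega : j ≤ j + (b : ℕ))] at this
  have hbe : (⟨j + (b : ℕ) - j, by omega⟩ : Fin (m - j)) = b := by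
    apply Fin.ext; simp
  rwa [hbe] at this

theorem exists_affine_quadratic_solution (m ℓ : ℕ) (hm : 3 ≤ m)
    (hℓ1 : 1 ≤ ℓ) (hℓ2 : ℓ ≤ m - 2)
    (L : Matrix (Fin m) (Fin m) ℝ) (hL : IsUnit L)
    (ψ : ℕ → Fin (m - (ℓ + 1)) → ℝ)
    (z : ℕ → Fin (m - 1) → ℝ)
    (hinner : ∀ i j : ℕ, ℓ + 1 ≤ i → i ≤ j → j ≤ m - 1 →
      (L *ᵥ pad m (ℓ + 1) (ψ i)) ⬝ᵥ (L *ᵥ pad m (ℓ + 1) (ψ j)) = z i ⬝ᵥ z j) :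
    ∃ v : Fin (m - ℓ) → ℝ,
      (∀ t : ℕ, ℓ + 1 ≤ t → t ≤ m - 1 →
        (L *ᵥ pad m (ℓ + 1) (ψ t)) ⬝ᵥ (L *ᵥ pad m ℓ v) = z t ⬝ᵥ z ℓ) ∧
      (L *ᵥ pad m ℓ v) ⬝ᵥ (L *ᵥ pad m ℓ v) = z ℓ ⬝ᵥ z ℓ := by
  classical
  have hm' : ℓ + 2 ≤ m := by omega
  set n : ℕ := m - 1 - ℓ with hn
  let em : (Fin m → ℝ) ≃ₗ[ℝ] EuclideanSpace ℝ (Fin m) :=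
    (WithLp.linearEquiv 2 ℝ (Fin m → ℝ)).symm
  let e1 : (Fin (m - 1) → ℝ) ≃ₗ[ℝ] EuclideanSpace ℝ (Fin (m - 1)) :=
    (WithLp.linearEquiv 2 ℝ (Fin (m - 1) → ℝ)).symm
  have hinm : ∀ x y : Fin m → ℝ, ⟪em x, em y⟫ = x ⬝ᵥ y := by
    intro x y
    have h : ⟪em x, em y⟫ = y ⬝ᵥ star x := rfl
    simpa [dotProduct_comm] using h
  have hin1 : ∀ x y : Fin (m - 1) → ℝ, ⟪e1 x, e1 y⟫ = x ⬝ᵥ y := by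
    intro x y
    have h : ⟪e1 x, e1 y⟫ = y ⬝ᵥ star x := rfl
    simpa [dotProduct_comm] using h
  let Φ : Fin n → EuclideanSpace ℝ (Fin m) :=
    fun k => em (L *ᵥ pad m (ℓ + 1) (ψ (ℓ + 1 + k)))
  let Z : Fin n → EuclideanSpace ℝ (Fin (m - 1)) := fun k => e1 (z (ℓ + 1 + k))
  have hkube : ∀ k : Fin n, ℓ + 1 + (k : ℕ) ≤ m - 1 := by
    intro k; have := k.isLt; omega
  have hG : ∀ i j : Fin n, ⟪Φ i, Φ j⟫ = ⟪Z i, Z j⟫ := by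
    intro i j
    rcases le_total (ℓ + 1 + (i : ℕ)) (ℓ + 1 + (j : ℕ)) with h | h
    · rw [hinm, hin1]
      exact hinner _ _ (by omega) h (hkube j)
    · rw [hinm, hin1, dotProduct_comm, dotProduct_comm (z _)]
      exact hinner _ _ (by omega) h (hkube i)
  let V : Submodule ℝ (EuclideanSpace ℝ (Fin (m - 1))) := Submodule.span ℝ (Set.range Z)
  let zl : EuclideanSpace ℝ (Fin (m - 1)) := e1 (z ℓ)
  let z' : EuclideanSpace ℝ (Fin (m - 1)) := (V.orthogonalProjectionOnto zl : _)
  have hz'mem : z' ∈ V := (V.orthogonalProjectionOnto zl).2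
  have hperp : zl - z' ∈ Vᗮ := Submodule.sub_starProjection_mem_orthogonal (K := V) zl
  obtain ⟨c, hc⟩ := Submodule.mem_span_range_iff_exists_fun ℝ |>.mp hz'mem
  let p : EuclideanSpace ℝ (Fin m) := ∑ i, c i • Φ i
  let S : Submodule ℝ (EuclideanSpace ℝ (Fin m)) := Submodule.span ℝ (Set.range Φ)
  have hpS : p ∈ S :=
    Submodule.sum_mem _ fun i _ =>
      Submodule.smul_mem _ _ (Submodule.subset_span ⟨i, rfl⟩)
  have hΦp : ∀ k : Fin n, ⟪Φ k, p⟫ = ⟪Z k, zl⟫ := by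
    intro k
    have h1 : ⟪Φ k, p⟫ = ∑ i, c i * ⟪Φ k, Φ i⟫ := by
      show ⟪Φ k, ∑ i, c i • Φ i⟫ = _
      rw [inner_sum]
      exact Finset.sum_congr rfl fun i _ => real_inner_smul_right _ _ _
    have h2 : ⟪Z k, z'⟫ = ∑ i, c i * ⟪Z k, Z i⟫ := by
      rw [← hc, inner_sum]
      exact Finset.sum_congr rfl fun i _ => real_inner_smul_right _ _ _
    have h3 : ⟪Z k, zl - z'⟫ = 0 :=
      hperp (Z k) (Submodule.subset_span ⟨k, rfl⟩)
    rw [inner_sub_right] at h3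
    rw [h1]
    have h4 : ∑ i, c i * ⟪Φ k, Φ i⟫ = ∑ i, c i * ⟪Z k, Z i⟫ := by
      refine Finset.sum_congr rfl fun i _ => by rw [hG]
    rw [h4, ← h2]; linarith
  have hpp : ⟪p, p⟫ = ⟪z', z'⟫ := by
    rw [← hc]
    show ⟪∑ i, c i • Φ i, ∑ i, c i • Φ i⟫ = ⟪∑ i, c i • Z i, ∑ i, c i • Z i⟫
    rw [sum_inner, sum_inner]
    refine Finset.sum_congr rfl fun i _ => ?_
    rw [real_inner_smul_left, real_inner_smul_left, inner_sum, inner_sum]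
    congr 1
    refine Finset.sum_congr rfl fun j _ => ?_
    rw [real_inner_smul_right, real_inner_smul_right, hG]
  have hdle : ⟪z', z'⟫ ≤ ⟪zl, zl⟫ := by
    have h0 : ⟪z', zl - z'⟫ = 0 := hperp z' hz'mem
    have h1 : zl = z' + (zl - z') := by abel
    have h2 : ⟪zl, zl⟫ = ⟪z', z'⟫ + 2 * ⟪z', zl - z'⟫ + ⟪zl - z', zl - z'⟫ := by
      conv_lhs => rw [h1]
      exact real_inner_add_add_self _ _
    have h3 : (0:ℝ) ≤ ⟪zl - z', zl - z'⟫ := real_inner_self_nonneg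
    linarith
  -- the subspace W
  let padL : (Fin (m - ℓ) → ℝ) →ₗ[ℝ] (Fin m → ℝ) :=
    { toFun := pad m ℓ, map_add' := pad_add m ℓ, map_smul' := pad_smul m ℓ }
  let T : (Fin (m - ℓ) → ℝ) →ₗ[ℝ] EuclideanSpace ℝ (Fin m) :=
    em.toLinearMap ∘ₗ (Matrix.mulVecLin L) ∘ₗ padL
  have hLinj : Function.Injective (L.mulVec) := mulVec_injective_iff_isUnit.2 hL
  have hTinj : Function.Injective T := by
    intro u u' h
    have h2 : em (L *ᵥ pad m ℓ u) = em (L *ᵥ pad m ℓ u') := h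
    exact pad_injective m ℓ (by omega) (hLinj (em.injective h2))
  let W : Submodule ℝ (EuclideanSpace ℝ (Fin m)) := LinearMap.range T
  have hWrank : Module.finrank ℝ W = m - ℓ := by
    rw [LinearMap.finrank_range_of_inj hTinj, Module.finrank_fin_fun]
  have hΦW : ∀ k : Fin n, Φ k ∈ W := by
    intro k
    refine ⟨pad (m - ℓ) 1 (ψ (ℓ + 1 + k)), ?_⟩
    show em (L *ᵥ pad m ℓ (pad (m - ℓ) 1 (ψ (ℓ + 1 + k)))) = Φ k
    rw [pad_pad]
  have hSW : S ≤ W := Submodule.span_le.mpr (Set.range_subset_iff.mpr hΦW)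
  have hSrank : Module.finrank ℝ S ≤ n := by
    have := finrank_range_le_card (R := ℝ) Φ
    simpa [Set.finrank] using this
  let S₀ : Submodule ℝ W := S.comap W.subtype
  have hS₀rank : Module.finrank ℝ S₀ = Module.finrank ℝ S :=
    (Submodule.comapSubtypeEquivOfLe hSW).finrank_eq
  have hS₀ne : S₀ ≠ ⊤ := by
    intro h
    have h1 : Module.finrank ℝ S₀ = m - ℓ := by
      rw [h, finrank_top, hWrank]
    omega
  obtain ⟨w₀, hw₀S, hw₀ne⟩ : ∃ w₀ ∈ S₀ᗮ, w₀ ≠ 0 := by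
    by_contra hcon
    push_neg at hcon
    have : S₀ᗮ = ⊥ := by
      rw [Submodule.eq_bot_iff]; exact fun x hx => hcon x hx
    exact hS₀ne (Submodule.orthogonal_eq_bot_iff.mp this)
  have hw₀norm : ‖(w₀ : EuclideanSpace ℝ (Fin m))‖ ≠ 0 := by
    simpa using hw₀ne
  let w : EuclideanSpace ℝ (Fin m) := ‖(w₀ : EuclideanSpace ℝ (Fin m))‖⁻¹ • (w₀ : EuclideanSpace ℝ (Fin m))
  have hwW : w ∈ W := W.smul_mem _ w₀.2
  have hww : ⟪w, w⟫ = 1 := by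
    show ⟪‖(w₀ : EuclideanSpace ℝ (Fin m))‖⁻¹ • (w₀ : EuclideanSpace ℝ (Fin m)),
        ‖(w₀ : EuclideanSpace ℝ (Fin m))‖⁻¹ • (w₀ : EuclideanSpace ℝ (Fin m))⟫ = 1
    rw [real_inner_smul_left, real_inner_smul_right, real_inner_self_eq_norm_sq, ← mul_assoc]
    field_simp
  have hwS : ∀ x ∈ S, ⟪x, w⟫ = 0 := by
    intro x hx
    have hx0 : (⟨x, hSW hx⟩ : W) ∈ S₀ := hx
    have h0 : ⟪(⟨x, hSW hx⟩ : W), w₀⟫ = 0 :=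
      (Submodule.mem_orthogonal _ _).mp hw₀S _ hx0
    have h1 : ⟪x, (w₀ : EuclideanSpace ℝ (Fin m))⟫ = 0 := h0
    show ⟪x, ‖(w₀ : EuclideanSpace ℝ (Fin m))‖⁻¹ • (w₀ : EuclideanSpace ℝ (Fin m))⟫ = 0
    rw [real_inner_smul_right, h1, mul_zero]
  set d : ℝ := ⟪zl, zl⟫ - ⟪z', z'⟫ with hdd
  have hd0 : 0 ≤ d := by simp only [hdd]; linarith
  let q : EuclideanSpace ℝ (Fin m) := p + Real.sqrt d • w
  have hqW : q ∈ W := W.add_mem (hSW hpS) (W.smul_mem _ hwW)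
  obtain ⟨v, hv⟩ := hqW
  have hTv : em (L *ᵥ pad m ℓ v) = q := hv
  refine ⟨v, ?_, ?_⟩
  · intro t ht1 ht2
    have hkn : t - (ℓ + 1) < n := by omega
    set k : Fin n := ⟨t - (ℓ + 1), hkn⟩ with hk
    have hte : ℓ + 1 + (k : ℕ) = t := by simp [hk]; omega
    have hΦk : Φ k = em (L *ᵥ pad m (ℓ + 1) (ψ t)) := by
      simp only [Φ, hte]
    have hZk : Z k = e1 (z t) := by simp only [Z, hte]
    have hdot : (L *ᵥ pad m (ℓ + 1) (ψ t)) ⬝ᵥ (L *ᵥ pad m ℓ v) = ⟪Φ k, q⟫ := by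
      rw [← hinm, hΦk, hTv]
    rw [hdot]
    have hΦS : Φ k ∈ S := Submodule.subset_span ⟨k, rfl⟩
    have hqinner : ⟪Φ k, q⟫ = ⟪Z k, zl⟫ := by
      show ⟪Φ k, p + Real.sqrt d • w⟫ = _
      rw [inner_add_right, real_inner_smul_right, hwS _ hΦS, mul_zero, add_zero, hΦp k]
    rw [hqinner, hZk]
    exact hin1 (z t) (z ℓ)
  · have hdot : (L *ᵥ pad m ℓ v) ⬝ᵥ (L *ᵥ pad m ℓ v) = ⟪q, q⟫ := by
      rw [← hinm, hTv]
    rw [hdot]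
    have h1 : ⟪q, q⟫ = ⟪p, p⟫ + 2 * (Real.sqrt d * ⟪p, w⟫)
        + Real.sqrt d * (Real.sqrt d * ⟪w, w⟫) := by
      show ⟪p + Real.sqrt d • w, p + Real.sqrt d • w⟫ = _
      rw [real_inner_add_add_self, real_inner_smul_right, real_inner_smul_left,
        real_inner_smul_right, real_inner_smul_right]
    rw [h1, hwS p hpS, hpp, hww, mul_zero, mul_one, Real.mul_self_sqrt hd0]
    have h2 : ⟪zl, zl⟫ = z ℓ ⬝ᵥ z ℓ := hin1 (z ℓ) (z ℓ)
    rw [← h2, hdd]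
    ring
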